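/- Let p and λ be real numbers with either (0 < p ≤ 1 and 0 < λ) or (1 < p ≤ 3/2 and 0 < λ ≤ 9p/10). Define R_{λ,p} = (−p − λ + √(λ² + 4pλ))/(2λ − p) if p ≠ 2λ, and R_{λ,p} = 1/3 if p = 2λ. Then for every r with R_{λ,p} < r < 1 there exists a ∈ [0,1) such that ((r + a)/(1 + a r))^p + λ (1 − a²) r/(1 − a r) > 1. (This exhibits, via the Möbius map f(z) = (a − z)/(1 − a z) evaluated at z = −r, the sharpness of the radius R_{λ,p} in the Bohr-type inequality |f(z)|^p + λ ∑_{k=1}^∞ |a_k| r^k ≤ 1.) -/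

import Mathlib

set_option maxHeartbeats 1000000

-- key power bound: for 0 < u ≤ 1 and p > 0, u^p ≥ 1 + p - p/u
lemma pow_lower (u p : ℝ) (hu : 0 < u) (hu1 : u ≤ 1) (hp : 0 < p) :
    1 + p - p / u ≤ u ^ p := by
  have hb : 1 + (p + 1) * (u - 1) ≤ (1 + (u - 1)) ^ (p + 1) := by
    apply one_add_mul_self_le_rpow_one_add (by linarith) (by linarith)
  have h1 : (1 + (u - 1)) = u := by ring
  rw [h1] at hb
  have h2 : u ^ (p + 1) = u ^ p * u := by
    rw [Real.rpow_add hu, Real.rpow_one]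
  rw [h2] at hb
  have h3 : p / u * u = p := div_mul_cancel₀ _ hu.ne'
  have h4 : (1 + p - p / u) * u ≤ u ^ p * u := by nlinarith
  exact le_of_mul_le_mul_right h4 hu

theorem bohr_two_params_sharp
    (p lam : ℝ)
    (h : (0 < p ∧ p ≤ 1 ∧ 0 < lam) ∨
         (1 < p ∧ p ≤ 3 / 2 ∧ 0 < lam ∧ lam ≤ 9 * p / 10))
    (R : ℝ)
    (hR : R = if p = 2 * lam then 1 / 3
              else (-p - lam + Real.sqrt (lam ^ 2 + 4 * p * lam)) / (2 * lam - p))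
    (r : ℝ) (hrR : R < r) (hr1 : r < 1) :
    ∃ a : ℝ, 0 ≤ a ∧ a < 1 ∧
      ((r + a) / (1 + a * r)) ^ p + lam * (1 - a ^ 2) * r / (1 - a * r) > 1 := by
  have hp : 0 < p := by rcases h with ⟨h1,_,_⟩|⟨h1,_,_⟩ <;> linarith
  have hl : 0 < lam := by rcases h with ⟨_,_,h3⟩|⟨_,_,h3,_⟩ <;> linarith
  clear h
  have hsnn : 0 ≤ Real.sqrt (lam ^ 2 + 4 * p * lam) := Real.sqrt_nonneg _
  have hs : Real.sqrt (lam ^ 2 + 4 * p * lam) ^ 2 = lam ^ 2 + 4 * p * lam :=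
    Real.sq_sqrt (by nlinarith)
  set s := Real.sqrt (lam ^ 2 + 4 * p * lam) with hsdef
  -- key: G(r) = (2λ-p)r² + 2(p+λ)r - p > 0 and r > 0
  have hG : (2 * lam - p) * r ^ 2 + 2 * (p + lam) * r - p > 0 ∧ 0 < r := by
    by_cases hc : p = 2 * lam
    · rw [if_pos hc] at hR
      have hr3 : 1/3 < r := hR ▸ hrR
      subst hc
      constructor
      · nlinarith
      · linarith
    · rw [if_neg hc] at hR
      rcases lt_or_gt_of_ne (fun h' : 2*lam - p = 0 => hc (by linarith)) with hd | hd
      · -- 2λ - p < 0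
        have hsel : s < p + lam := by nlinarith
        have hRpos : 0 < R := by
          rw [hR]; apply div_pos_of_neg_of_neg (by linarith) (by linarith)
        have hr0 : 0 < r := lt_trans hRpos hrR
        have hB : s > p + lam - r * (p - 2*lam) := by
          have := (div_lt_iff_of_neg (by linarith : 2*lam - p < 0)).mp (hR ▸ hrR)
          nlinarith
        have hBpos : 0 < p + lam - r * (p - 2*lam) := by nlinarith
        have hB2 : lam ^ 2 + 4 * p * lam > (p + lam - r * (p - 2*lam)) ^ 2 := by
          nlinarith
        exact ⟨by nlinarith, hr0⟩
      · -- 2λ - p > 0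
        have hsel : p + lam < s := by nlinarith
        have hRpos : 0 < R := by
          rw [hR]; exact div_pos (by linarith) hd
        have hr0 : 0 < r := lt_trans hRpos hrR
        have hA : s < r * (2*lam - p) + p + lam := by
          have := (div_lt_iff₀ hd).mp (hR ▸ hrR)
          linarith
        have hA2 : lam ^ 2 + 4 * p * lam < (r * (2*lam - p) + p + lam) ^ 2 := by
          nlinarith
        exact ⟨by nlinarith, hr0⟩
  obtain ⟨hGr, hr0⟩ := hG
  clear hs hsnn hsdef hR hrR
  -- ε := 2λr(1+r) - p(1-r)² > 0
  have heps : 0 < 2*lam*r*(1+r) - p*(1-r)^2 := by nlinarith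
  set ε := 2*lam*r*(1+r) - p*(1-r)^2 with hepsdef
  set C := 4*lam*r + p + 1 with hCdef
  have hC : 0 < C := by positivity
  set t := min (1/2 : ℝ) (ε / C) with htdef
  have ht0 : 0 < t := lt_min (by norm_num) (div_pos heps hC)
  have ht2 : t ≤ 1/2 := min_le_left _ _
  have htC : t * C ≤ ε := by
    rw [← le_div_iff₀ hC]; exact min_le_right _ _
  clear_value t
  refine ⟨1 - t, by linarith, by linarith, ?_⟩
  set a := 1 - t with hadef
  have ha0 : 1/2 ≤ a := by rw [hadef]; linarith
  have ha1 : a < 1 := by rw [hadef]; linarith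
  have h1a : 0 < 1 - a := by linarith
  clear_value a
  -- denominators
  have hden1 : 0 < 1 + a * r := by nlinarith
  have hden2 : 0 < 1 - a * r := by nlinarith
  have hratop : 0 < r + a := by linarith
  -- the polynomial inequality (★)
  have hkey0 : 0 < ε - t * (4*lam*r + p) := by
    have : t * (4*lam*r + p) = t * C - t := by rw [hCdef]; ring
    linarith
  have hstar : p * (1 - r) * (1 - a * r) < lam * (1 + a) * r * (r + a) := by
    rw [hadef]
    have e1 : 0 ≤ t * (lam * r * (1 - r + t)) := by
      apply mul_nonneg ht0.le
      apply mul_nonneg (mul_nonneg hl.le hr0.le) (by linarith)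
    have e2 : 0 ≤ t * (p * (1 - r + r^2)) := by
      apply mul_nonneg ht0.le
      apply mul_nonneg hp.le (by nlinarith)
    rw [hepsdef] at hkey0
    nlinarith [hkey0, e1, e2]
  set u := (r + a) / (1 + a * r) with hudef
  clear_value u
  have hu0 : 0 < u := hudef ▸ div_pos hratop hden1
  have hu1 : u ≤ 1 := by
    rw [hudef, div_le_one hden1]
    nlinarith [mul_pos h1a (show (0:ℝ) < 1 - r by linarith)]
  have hkey : p / u - p < lam * (1 - a ^ 2) * r / (1 - a * r) := by
    have hq : p / u - p = p * (1 - a) * (1 - r) / (r + a) := by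
      rw [hudef, div_div_eq_mul_div]
      rw [div_sub' hratop.ne', div_eq_div_iff hratop.ne' hratop.ne']
      ring
    rw [hq, div_lt_div_iff₀ hratop hden2]
    nlinarith [mul_lt_mul_of_pos_left hstar h1a]
  have hpow := pow_lower u p hu0 hu1 hp
  linarith [hpow, hkey]
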